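/- Let N = 2^n and let 𝒜̄ ⊆ {1, …, N} be a set of frozen indices defining an n-frozen bit polar decoding graph of rate R = 1 − |𝒜̄|/N with R > 2/3. Then the minimum bisection width ω of the set of unfrozen nodes of this graph satisfies ω ≥ N(3R − 2). -/

import Mathlib

/-- Vertex type of the polar decoding graph `P_{k+1}`.  `PV 0` is the vertex type of
`P_1` (two symbol nodes and two right-hand nodes), and the vertices of `P_{k+2}` are
`2^(k+2)` new symbol nodes together with two disjoint copies of the vertices of
`P_{k+1}`. -/
def PV : ℕ → Type
  | 0 => Fin 2 ⊕ Fin 2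
  | k + 1 => Fin (2 ^ (k + 2)) ⊕ (PV k ⊕ PV k)

/-- The `i`-th symbol node of `P_{k+1}` (there are `2^(k+1)` of them). -/
def sym : (k : ℕ) → Fin (2 ^ (k + 1)) → PV k
  | 0, i => Sum.inl i
  | _ + 1, i => Sum.inl i

/-- The polar decoding graph `P_{k+1}` on vertex type `PV k`.  `P_1` is the complete
bipartite graph `K_{2,2}` whose two left vertices are its symbol nodes.  `P_{k+2}`
consists of `2^(k+2)` symbol nodes together with two copies of `P_{k+1}`; the symbol
nodes `a_{2i}` and `a_{2i+1}` (0-indexed) are joined to the `i`-th symbol node of each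
copy, giving the `i`-th bowtie. -/
def PG : (k : ℕ) → SimpleGraph (PV k)
  | 0 => SimpleGraph.fromRel (fun u v => u.isLeft ∧ v.isRight)
  | k + 1 =>
    SimpleGraph.fromRel (fun u v =>
      match u, v with
      | Sum.inl j, Sum.inr w =>
          ∃ i : Fin (2 ^ (k + 1)), (j : ℕ) / 2 = (i : ℕ) ∧
            (w = Sum.inl (sym k i) ∨ w = Sum.inr (sym k i))
      | Sum.inr (Sum.inl a), Sum.inr (Sum.inl b) => (PG k).Adj a b
      | Sum.inr (Sum.inr a), Sum.inr (Sum.inr b) => (PG k).Adj a b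
      | _, _ => False)

/-- The width of the partition `(A, Aᶜ)` of the vertices of `G`: the number of edges
of `G` with one endpoint in `A` and the other outside `A`. -/
noncomputable def partWidth {V : Type} (G : SimpleGraph V) (A : Set V) : ℕ :=
  {p : V × V | p.1 ∈ A ∧ p.2 ∉ A ∧ G.Adj p.1 p.2}.ncard


instance instFinitePV : ∀ k, Finite (PV k)
  | 0 => inferInstanceAs (Finite (Fin 2 ⊕ Fin 2))
  | k + 1 => have := instFinitePV k
             inferInstanceAs (Finite (Fin (2 ^ (k + 2)) ⊕ (PV k ⊕ PV k)))

lemma sym_injective (k : ℕ) : Function.Injective (sym k) := by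
  cases k with
  | zero =>
    intro a b h
    have h' : (Sum.inl a : Fin 2 ⊕ Fin 2) = Sum.inl b := h
    simpa using h'
  | succ n =>
    intro a b h
    have h' : (Sum.inl a : Fin (2 ^ (n + 2)) ⊕ (PV n ⊕ PV n)) = Sum.inl b := h
    simpa using h'

lemma sym_succ (k : ℕ) (i : Fin (2 ^ (k + 2))) : sym (k + 1) i = Sum.inl i := rfl

lemma adj_top {k : ℕ} (j : Fin (2 ^ (k + 2))) (w : PV k ⊕ PV k) :
    (PG (k + 1)).Adj (Sum.inl j) (Sum.inr w) ↔
      ∃ i : Fin (2 ^ (k + 1)), (j : ℕ) / 2 = (i : ℕ) ∧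
        (w = Sum.inl (sym k i) ∨ w = Sum.inr (sym k i)) := by
  show (SimpleGraph.fromRel _).Adj _ _ ↔ _
  refine Iff.trans (SimpleGraph.fromRel_adj _ _ _) ?_
  constructor
  · rintro ⟨-, h | h⟩
    · exact h
    · rcases w with w | w <;> exact h.elim
  · intro h
    exact ⟨fun hc => Sum.inl_ne_inr (hc : (Sum.inl j : Fin (2 ^ (k + 2)) ⊕ (PV k ⊕ PV k)) = Sum.inr w),
      Or.inl h⟩

lemma adj_left {k : ℕ} (a b : PV k) :
    (PG (k + 1)).Adj (Sum.inr (Sum.inl a)) (Sum.inr (Sum.inl b)) ↔ (PG k).Adj a b := by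
  show (SimpleGraph.fromRel _).Adj _ _ ↔ _
  refine Iff.trans (SimpleGraph.fromRel_adj _ _ _) ?_
  constructor
  · rintro ⟨h, h1 | h1⟩
    · exact h1
    · exact h1.symm
  · intro h
    refine ⟨?_, Or.inl h⟩
    intro hc
    have hc' : (Sum.inr (Sum.inl a) : Fin (2 ^ (k + 2)) ⊕ (PV k ⊕ PV k)) = Sum.inr (Sum.inl b) := hc
    obtain rfl : a = b := by simpa using hc'
    exact (PG k).irrefl h

lemma adj_right {k : ℕ} (a b : PV k) :
    (PG (k + 1)).Adj (Sum.inr (Sum.inr a)) (Sum.inr (Sum.inr b)) ↔ (PG k).Adj a b := by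
  show (SimpleGraph.fromRel _).Adj _ _ ↔ _
  refine Iff.trans (SimpleGraph.fromRel_adj _ _ _) ?_
  constructor
  · rintro ⟨h, h1 | h1⟩
    · exact h1
    · exact h1.symm
  · intro h
    refine ⟨?_, Or.inl h⟩
    intro hc
    have hc' : (Sum.inr (Sum.inr a) : Fin (2 ^ (k + 2)) ⊕ (PV k ⊕ PV k)) = Sum.inr (Sum.inr b) := hc
    obtain rfl : a = b := by simpa using hc'
    exact (PG k).irrefl h

def notFrozen (k : ℕ) (F : Finset (Fin (2 ^ (k + 1)))) (v : PV k) : Prop :=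
  ∀ j ∈ F, v ≠ sym k j

def cutP (k : ℕ) (F : Finset (Fin (2 ^ (k + 1)))) (c : PV k → Bool) : Set (PV k × PV k) :=
  {p | (PG k).Adj p.1 p.2 ∧ c p.1 = true ∧ c p.2 = false ∧
    notFrozen k F p.1 ∧ notFrozen k F p.2}

noncomputable def xcnt (k : ℕ) (F : Finset (Fin (2 ^ (k + 1)))) (c : PV k → Bool) (s : Bool) : ℕ :=
  {j : Fin (2 ^ (k + 1)) | j ∉ F ∧ c (sym k j) = s}.ncard

def halfFin {n : ℕ} (j : Fin (2 ^ (n + 2))) : Fin (2 ^ (n + 1)) :=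
  ⟨(j : ℕ) / 2, by
    have h1 := j.isLt
    have h2 : 2 ^ (n + 2) = 2 ^ (n + 1) * 2 := pow_succ 2 (n + 1)
    omega⟩

lemma ncard_half_preimage {n : ℕ} (P : Fin (2 ^ (n + 1)) → Prop) :
    {j : Fin (2 ^ (n + 2)) | P (halfFin j)}.ncard ≤ 2 * {i | P i}.ncard := by
  have key : Nat.card {j : Fin (2 ^ (n + 2)) | P (halfFin j)} ≤
      Nat.card (Fin 2 × {i : Fin (2 ^ (n + 1)) | P i}) := by
    apply Nat.card_le_card_of_injective
      (f := fun j => (⟨((j : Fin (2 ^ (n + 2))) : ℕ) % 2, Nat.mod_lt _ (by norm_num)⟩,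
        ⟨halfFin (j : Fin (2 ^ (n + 2))), j.2⟩))
    intro a b h
    simp only [Prod.mk.injEq, Subtype.mk.injEq, halfFin, Fin.mk.injEq] at h
    have : ((a : Fin (2 ^ (n + 2))) : ℕ) = ((b : Fin (2 ^ (n + 2))) : ℕ) := by omega
    exact Subtype.ext (Fin.ext this)
  calc {j : Fin (2 ^ (n + 2)) | P (halfFin j)}.ncard
      = Nat.card {j : Fin (2 ^ (n + 2)) | P (halfFin j)} :=
        (Nat.card_coe_set_eq _).symm
    _ ≤ Nat.card (Fin 2 × {i : Fin (2 ^ (n + 1)) | P i}) := key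
    _ = 2 * {i | P i}.ncard := by
        rw [Nat.card_prod, Nat.card_eq_fintype_card, Fintype.card_fin,
          Nat.card_coe_set_eq]

lemma inl_injP {n : ℕ} {a b : Fin (2 ^ (n + 2))} (h : (Sum.inl a : PV (n + 1)) = Sum.inl b) :
    a = b := by
  have h' : (Sum.inl a : Fin (2 ^ (n + 2)) ⊕ (PV n ⊕ PV n)) = Sum.inl b := h
  simpa using h'

lemma inl_ne_inrP {n : ℕ} (a : Fin (2 ^ (n + 2))) (w : PV n ⊕ PV n) :
    (Sum.inl a : PV (n + 1)) ≠ Sum.inr w := by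
  intro h
  exact absurd (h : (Sum.inl a : Fin (2 ^ (n + 2)) ⊕ (PV n ⊕ PV n)) = Sum.inr w) (by simp)

lemma inrl_injP {n : ℕ} {a b : PV n} (h : (Sum.inr (Sum.inl a) : PV (n + 1)) = Sum.inr (Sum.inl b)) :
    a = b := by
  have h' : (Sum.inr (Sum.inl a) : Fin (2 ^ (n + 2)) ⊕ (PV n ⊕ PV n)) = Sum.inr (Sum.inl b) := h
  simpa using h'

lemma inrr_injP {n : ℕ} {a b : PV n} (h : (Sum.inr (Sum.inr a) : PV (n + 1)) = Sum.inr (Sum.inr b)) :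
    a = b := by
  have h' : (Sum.inr (Sum.inr a) : Fin (2 ^ (n + 2)) ⊕ (PV n ⊕ PV n)) = Sum.inr (Sum.inr b) := h
  simpa using h'

def shape2 {n : ℕ} :
    (Fin (2 ^ (n + 2)) ⊕ (PV n ⊕ PV n)) × (Fin (2 ^ (n + 2)) ⊕ (PV n ⊕ PV n)) → ℕ
  | (Sum.inl _, Sum.inr (Sum.inl _)) => 1
  | (Sum.inr (Sum.inl _), Sum.inl _) => 1
  | (Sum.inl _, Sum.inr (Sum.inr _)) => 2
  | (Sum.inr (Sum.inr _), Sum.inl _) => 2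
  | (Sum.inr (Sum.inl _), Sum.inr (Sum.inl _)) => 3
  | (Sum.inr (Sum.inr _), Sum.inr (Sum.inr _)) => 4
  | _ => 0


def phiL {n : ℕ} (c : PV (n + 1) → Bool) (j : Fin (2 ^ (n + 2))) : PV (n + 1) × PV (n + 1) :=
  if c (Sum.inl j) = true then (Sum.inl j, Sum.inr (Sum.inl (sym n (halfFin j))))
  else (Sum.inr (Sum.inl (sym n (halfFin j))), Sum.inl j)

def phiR {n : ℕ} (c : PV (n + 1) → Bool) (j : Fin (2 ^ (n + 2))) : PV (n + 1) × PV (n + 1) :=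
  if c (Sum.inl j) = true then (Sum.inl j, Sum.inr (Sum.inr (sym n (halfFin j))))
  else (Sum.inr (Sum.inr (sym n (halfFin j))), Sum.inl j)

def embL {n : ℕ} (q : PV n × PV n) : PV (n + 1) × PV (n + 1) :=
  (Sum.inr (Sum.inl q.1), Sum.inr (Sum.inl q.2))

def embR {n : ℕ} (q : PV n × PV n) : PV (n + 1) × PV (n + 1) :=
  (Sum.inr (Sum.inr q.1), Sum.inr (Sum.inr q.2))

lemma phiL_inj {n : ℕ} (c : PV (n + 1) → Bool) : Function.Injective (phiL (n := n) c) := by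
  intro a b h
  unfold phiL at h
  split_ifs at h with ha hb hb
  · exact inl_injP (congrArg Prod.fst h)
  · exact absurd (congrArg Prod.fst h) (inl_ne_inrP _ _)
  · exact absurd (congrArg Prod.fst h).symm (inl_ne_inrP _ _)
  · exact inl_injP (congrArg Prod.snd h)

lemma phiR_inj {n : ℕ} (c : PV (n + 1) → Bool) : Function.Injective (phiR (n := n) c) := by
  intro a b h
  unfold phiR at h
  split_ifs at h with ha hb hb
  · exact inl_injP (congrArg Prod.fst h)
  · exact absurd (congrArg Prod.fst h) (inl_ne_inrP _ _)
  · exact absurd (congrArg Prod.fst h).symm (inl_ne_inrP _ _)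
  · exact inl_injP (congrArg Prod.snd h)

lemma embL_inj {n : ℕ} : Function.Injective (embL (n := n)) := by
  intro a b h
  unfold embL at h
  exact Prod.ext (inrl_injP (congrArg Prod.fst h)) (inrl_injP (congrArg Prod.snd h))

lemma embR_inj {n : ℕ} : Function.Injective (embR (n := n)) := by
  intro a b h
  unfold embR at h
  exact Prod.ext (inrr_injP (congrArg Prod.fst h)) (inrr_injP (congrArg Prod.snd h))

lemma shape2_phiL {n : ℕ} (c : PV (n + 1) → Bool) (j : Fin (2 ^ (n + 2))) :
    shape2 (phiL c j) = 1 := by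
  unfold phiL; split_ifs <;> rfl

lemma shape2_phiR {n : ℕ} (c : PV (n + 1) → Bool) (j : Fin (2 ^ (n + 2))) :
    shape2 (phiR c j) = 2 := by
  unfold phiR; split_ifs <;> rfl

lemma shape2_embL {n : ℕ} (q : PV n × PV n) : shape2 (embL q) = 3 := rfl

lemma shape2_embR {n : ℕ} (q : PV n × PV n) : shape2 (embR q) = 4 := rfl

lemma notFrozen_inr {n : ℕ} (F : Finset (Fin (2 ^ (n + 2)))) (w : PV n ⊕ PV n) :
    notFrozen (n + 1) F (Sum.inr w) := by
  intro j hj h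
  rw [sym_succ] at h
  exact inl_ne_inrP j w h.symm

lemma notFrozen_inl {n : ℕ} (F : Finset (Fin (2 ^ (n + 2)))) (j : Fin (2 ^ (n + 2)))
    (hj : j ∉ F) : notFrozen (n + 1) F (Sum.inl j) := by
  intro j' hj' h
  rw [sym_succ] at h
  exact hj (inl_injP h ▸ hj')

lemma phiL_mem {n : ℕ} (F : Finset (Fin (2 ^ (n + 2)))) (c : PV (n + 1) → Bool)
    (j : Fin (2 ^ (n + 2))) (hjF : j ∉ F)
    (hne : c (Sum.inl j) ≠ c (Sum.inr (Sum.inl (sym n (halfFin j))))) :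
    phiL c j ∈ cutP (n + 1) F c := by
  have hadj : (PG (n + 1)).Adj (Sum.inl j) (Sum.inr (Sum.inl (sym n (halfFin j)))) :=
    (adj_top j _).mpr ⟨halfFin j, rfl, Or.inl rfl⟩
  by_cases hc : c (Sum.inl j) = true
  · have hc2 : c (Sum.inr (Sum.inl (sym n (halfFin j)))) = false := by
      revert hne; rw [hc]; cases c (Sum.inr (Sum.inl (sym n (halfFin j)))) <;> simp
    rw [phiL, if_pos hc]
    exact ⟨hadj, hc, hc2, notFrozen_inl F j hjF, notFrozen_inr F _⟩
  · have hc1 : c (Sum.inl j) = false := by simpa using hc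
    have hc2 : c (Sum.inr (Sum.inl (sym n (halfFin j)))) = true := by
      revert hne; rw [hc1]; cases c (Sum.inr (Sum.inl (sym n (halfFin j)))) <;> simp
    rw [phiL, if_neg hc]
    exact ⟨hadj.symm, hc2, hc1, notFrozen_inr F _, notFrozen_inl F j hjF⟩

lemma phiR_mem {n : ℕ} (F : Finset (Fin (2 ^ (n + 2)))) (c : PV (n + 1) → Bool)
    (j : Fin (2 ^ (n + 2))) (hjF : j ∉ F)
    (hne : c (Sum.inl j) ≠ c (Sum.inr (Sum.inr (sym n (halfFin j))))) :
    phiR c j ∈ cutP (n + 1) F c := by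
  have hadj : (PG (n + 1)).Adj (Sum.inl j) (Sum.inr (Sum.inr (sym n (halfFin j)))) :=
    (adj_top j _).mpr ⟨halfFin j, rfl, Or.inr rfl⟩
  by_cases hc : c (Sum.inl j) = true
  · have hc2 : c (Sum.inr (Sum.inr (sym n (halfFin j)))) = false := by
      revert hne; rw [hc]; cases c (Sum.inr (Sum.inr (sym n (halfFin j)))) <;> simp
    rw [phiR, if_pos hc]
    exact ⟨hadj, hc, hc2, notFrozen_inl F j hjF, notFrozen_inr F _⟩
  · have hc1 : c (Sum.inl j) = false := by simpa using hc
    have hc2 : c (Sum.inr (Sum.inr (sym n (halfFin j)))) = true := by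
      revert hne; rw [hc1]; cases c (Sum.inr (Sum.inr (sym n (halfFin j)))) <;> simp
    rw [phiR, if_neg hc]
    exact ⟨hadj.symm, hc2, hc1, notFrozen_inr F _, notFrozen_inl F j hjF⟩

lemma embL_mem {n : ℕ} (F : Finset (Fin (2 ^ (n + 2)))) (c : PV (n + 1) → Bool)
    (q : PV n × PV n) (hq : q ∈ cutP n ∅ (fun a => c (Sum.inr (Sum.inl a)))) :
    embL q ∈ cutP (n + 1) F c := by
  obtain ⟨hadj, h1, h2, -, -⟩ := hq
  exact ⟨(adj_left q.1 q.2).mpr hadj, h1, h2, notFrozen_inr F _, notFrozen_inr F _⟩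

lemma embR_mem {n : ℕ} (F : Finset (Fin (2 ^ (n + 2)))) (c : PV (n + 1) → Bool)
    (q : PV n × PV n) (hq : q ∈ cutP n ∅ (fun a => c (Sum.inr (Sum.inr a)))) :
    embR q ∈ cutP (n + 1) F c := by
  obtain ⟨hadj, h1, h2, -, -⟩ := hq
  exact ⟨(adj_right q.1 q.2).mpr hadj, h1, h2, notFrozen_inr F _, notFrozen_inr F _⟩

lemma xcnt_empty {n : ℕ} (c : PV n → Bool) (s : Bool) :
    xcnt n ∅ c s = {i : Fin (2 ^ (n + 1)) | c (sym n i) = s}.ncard := by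
  unfold xcnt
  congr 1
  ext i
  simp

lemma count_side {n : ℕ} (F : Finset (Fin (2 ^ (n + 2)))) (c : PV (n + 1) → Bool)
    (cl : PV n → Bool) (D : Set (Fin (2 ^ (n + 2))))
    (hD : D = {j : Fin (2 ^ (n + 2)) | j ∉ F ∧ c (Sum.inl j) ≠ cl (sym n (halfFin j))})
    (s : Bool) :
    xcnt (n + 1) F c s ≤ D.ncard + 2 * xcnt n ∅ cl s := by
  have hsub : {j : Fin (2 ^ (n + 2)) | j ∉ F ∧ c (sym (n + 1) j) = s} ⊆
      D ∪ {j : Fin (2 ^ (n + 2)) | cl (sym n (halfFin j)) = s} := by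
    rintro j ⟨hj, hcj⟩
    rw [sym_succ] at hcj
    by_cases h : cl (sym n (halfFin j)) = s
    · exact Or.inr h
    · exact Or.inl (hD ▸ ⟨hj, fun heq => h (heq.symm.trans hcj)⟩)
  calc xcnt (n + 1) F c s
      = {j : Fin (2 ^ (n + 2)) | j ∉ F ∧ c (sym (n + 1) j) = s}.ncard := rfl
    _ ≤ (D ∪ {j : Fin (2 ^ (n + 2)) | cl (sym n (halfFin j)) = s}).ncard :=
        Set.ncard_le_ncard hsub (Set.toFinite _)
    _ ≤ D.ncard + {j : Fin (2 ^ (n + 2)) | cl (sym n (halfFin j)) = s}.ncard :=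
        Set.ncard_union_le _ _
    _ ≤ D.ncard + 2 * {i : Fin (2 ^ (n + 1)) | cl (sym n i) = s}.ncard := by
        have := ncard_half_preimage (fun i => cl (sym n i) = s)
        omega
    _ = D.ncard + 2 * xcnt n ∅ cl s := by rw [xcnt_empty]

lemma base_case (F : Finset (Fin (2 ^ (0 + 1)))) (c : PV 0 → Bool) :
    2 * min (xcnt 0 F c true) (xcnt 0 F c false) ≤ (cutP 0 F c).ncard := by
  rcases Nat.eq_zero_or_pos (min (xcnt 0 F c true) (xcnt 0 F c false)) with h0 | hpos
  · rw [h0]; exact Nat.zero_le _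
  -- both color classes nonempty
  have ht : {j : Fin (2 ^ (0 + 1)) | j ∉ F ∧ c (sym 0 j) = true}.Nonempty := by
    rw [← Set.ncard_pos (Set.toFinite _)]
    exact lt_of_lt_of_le hpos (min_le_left _ _)
  have hf : {j : Fin (2 ^ (0 + 1)) | j ∉ F ∧ c (sym 0 j) = false}.Nonempty := by
    rw [← Set.ncard_pos (Set.toFinite _)]
    exact lt_of_lt_of_le hpos (min_le_right _ _)
  obtain ⟨jt, hjt, hct⟩ := ht
  obtain ⟨jf, hjf, hcf⟩ := hf
  -- min ≤ 1
  have hsum : xcnt 0 F c true + xcnt 0 F c false ≤ 2 := by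
    have hd : Disjoint {j : Fin (2 ^ (0 + 1)) | j ∉ F ∧ c (sym 0 j) = true}
        {j : Fin (2 ^ (0 + 1)) | j ∉ F ∧ c (sym 0 j) = false} := by
      rw [Set.disjoint_left]
      rintro j ⟨-, h1⟩ ⟨-, h2⟩
      rw [h1] at h2; exact Bool.noConfusion h2
    have := Set.ncard_union_eq hd (Set.toFinite _) (Set.toFinite _)
    calc xcnt 0 F c true + xcnt 0 F c false
        = ({j : Fin (2 ^ (0 + 1)) | j ∉ F ∧ c (sym 0 j) = true} ∪
            {j : Fin (2 ^ (0 + 1)) | j ∉ F ∧ c (sym 0 j) = false}).ncard := this.symm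
      _ ≤ (Set.univ : Set (Fin (2 ^ (0 + 1)))).ncard :=
          Set.ncard_le_ncard (Set.subset_univ _) (Set.toFinite _)
      _ = 2 := by rw [Set.ncard_univ]; simp
  have hmin : min (xcnt 0 F c true) (xcnt 0 F c false) ≤ 1 := by omega
  -- two cut pairs, one through each right-hand vertex
  have mem : ∀ r : Fin 2,
      (if c (Sum.inr r) = true then ((Sum.inr r, Sum.inl jf) : PV 0 × PV 0)
        else ((Sum.inl jt, Sum.inr r) : PV 0 × PV 0)) ∈ cutP 0 F c := by
    intro r
    have hadj : ∀ (i : Fin (2 ^ (0 + 1))), (PG 0).Adj (Sum.inl i) (Sum.inr r) := by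
      intro i
      show (SimpleGraph.fromRel _).Adj _ _
      refine (SimpleGraph.fromRel_adj _ _ _).mpr ?_
      constructor
      · intro h
        exact absurd (h : (Sum.inl i : Fin 2 ⊕ Fin 2) = Sum.inr r) (by simp)
      · left; exact ⟨rfl, rfl⟩
    have hnfr : notFrozen 0 F (Sum.inr r) := by
      intro j hj h
      exact Sum.inr_ne_inl (h : (Sum.inr r : Fin 2 ⊕ Fin 2) = Sum.inl j)
    have hnfl : ∀ (i : Fin (2 ^ (0 + 1))), i ∉ F → notFrozen 0 F (Sum.inl i) := by
      intro i hi j hj h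
      have : i = j := by
        have h' : (Sum.inl i : Fin 2 ⊕ Fin 2) = Sum.inl j := h
        simpa using h'
      exact hi (this ▸ hj)
    by_cases hc : c (Sum.inr r) = true
    · rw [if_pos hc]
      exact ⟨(hadj jf).symm, hc, hcf, hnfr, hnfl jf hjf⟩
    · rw [if_neg hc]
      exact ⟨hadj jt, hct, by simpa using hc, hnfl jt hjt, hnfr⟩
  set p0 := (if c (Sum.inr (0 : Fin 2)) = true then ((Sum.inr 0, Sum.inl jf) : PV 0 × PV 0)
    else ((Sum.inl jt, Sum.inr 0) : PV 0 × PV 0)) with hp0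
  set p1 := (if c (Sum.inr (1 : Fin 2)) = true then ((Sum.inr 1, Sum.inl jf) : PV 0 × PV 0)
    else ((Sum.inl jt, Sum.inr 1) : PV 0 × PV 0)) with hp1
  have hne : p0 ≠ p1 := by
    have h01 : (Sum.inr (0 : Fin 2) : PV 0) ≠ Sum.inr (1 : Fin 2) := by
      intro h
      have h' : (Sum.inr (0 : Fin 2) : Fin 2 ⊕ Fin 2) = Sum.inr 1 := h
      simpa using h'
    have hlr : ∀ (i : Fin (2 ^ (0 + 1))) (r : Fin 2), (Sum.inl i : PV 0) ≠ Sum.inr r := by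
      intro i r h
      exact absurd (h : (Sum.inl i : Fin 2 ⊕ Fin 2) = Sum.inr r) (by simp)
    rw [hp0, hp1]
    by_cases h0 : c (Sum.inr (0 : Fin 2)) = true <;>
      by_cases h1 : c (Sum.inr (1 : Fin 2)) = true
    · rw [if_pos h0, if_pos h1]
      intro h
      exact h01 (congrArg Prod.fst h)
    · rw [if_pos h0, if_neg h1]
      intro h
      exact hlr jt 0 (congrArg Prod.fst h).symm
    · rw [if_neg h0, if_pos h1]
      intro h
      exact hlr jt 1 (congrArg Prod.fst h)
    · rw [if_neg h0, if_neg h1]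
      intro h
      exact h01 (congrArg Prod.snd h)
  have hsub : {p0, p1} ⊆ cutP 0 F c := by
    rintro p (rfl | rfl)
    · exact mem 0
    · exact mem 1
  have h2 : 2 ≤ (cutP 0 F c).ncard := by
    have := Set.ncard_le_ncard hsub (Set.toFinite _)
    rwa [Set.ncard_pair hne] at this
  omega

lemma step_case (n : ℕ)
    (ih : ∀ (F : Finset (Fin (2 ^ (n + 1)))) (c : PV n → Bool),
      2 * min (xcnt n F c true) (xcnt n F c false) ≤ (cutP n F c).ncard)
    (F : Finset (Fin (2 ^ (n + 1 + 1)))) (c : PV (n + 1) → Bool) :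
    2 * min (xcnt (n + 1) F c true) (xcnt (n + 1) F c false) ≤ (cutP (n + 1) F c).ncard := by
  set cl : PV n → Bool := fun a => c (Sum.inr (Sum.inl a)) with hcl
  set cr : PV n → Bool := fun a => c (Sum.inr (Sum.inr a)) with hcr
  set DL : Set (Fin (2 ^ (n + 2))) :=
    {j : Fin (2 ^ (n + 2)) | j ∉ F ∧ c (Sum.inl j) ≠ cl (sym n (halfFin j))} with hDL
  set DR : Set (Fin (2 ^ (n + 2))) :=
    {j : Fin (2 ^ (n + 2)) | j ∉ F ∧ c (Sum.inl j) ≠ cr (sym n (halfFin j))} with hDR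
  -- counting bounds
  have minL : min (xcnt (n + 1) F c true) (xcnt (n + 1) F c false) ≤
      DL.ncard + (cutP n ∅ cl).ncard := by
    have h2 := ih ∅ cl
    have hct := count_side F c cl DL hDL true
    have hcf := count_side F c cl DL hDL false
    rcases le_total (xcnt n ∅ cl true) (xcnt n ∅ cl false) with h | h
    · have := min_le_left (xcnt (n + 1) F c true) (xcnt (n + 1) F c false)
      rw [min_eq_left h] at h2
      omega
    · have := min_le_right (xcnt (n + 1) F c true) (xcnt (n + 1) F c false)
      rw [min_eq_right h] at h2
      omega
  have minR : min (xcnt (n + 1) F c true) (xcnt (n + 1) F c false) ≤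
      DR.ncard + (cutP n ∅ cr).ncard := by
    have h2 := ih ∅ cr
    have hct := count_side F c cr DR hDR true
    have hcf := count_side F c cr DR hDR false
    rcases le_total (xcnt n ∅ cr true) (xcnt n ∅ cr false) with h | h
    · have := min_le_left (xcnt (n + 1) F c true) (xcnt (n + 1) F c false)
      rw [min_eq_left h] at h2
      omega
    · have := min_le_right (xcnt (n + 1) F c true) (xcnt (n + 1) F c false)
      rw [min_eq_right h] at h2
      omega
  -- the four disjoint families of cut edges
  set AL : Set (PV (n + 1) × PV (n + 1)) := phiL c '' DL with hAL
  set AR : Set (PV (n + 1) × PV (n + 1)) := phiR c '' DR with hAR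
  set BL : Set (PV (n + 1) × PV (n + 1)) := embL '' cutP n ∅ cl with hBL
  set BR : Set (PV (n + 1) × PV (n + 1)) := embR '' cutP n ∅ cr with hBR
  have sAL : ∀ p ∈ AL, shape2 p = 1 := by rintro p ⟨j, -, rfl⟩; exact shape2_phiL c j
  have sAR : ∀ p ∈ AR, shape2 p = 2 := by rintro p ⟨j, -, rfl⟩; exact shape2_phiR c j
  have sBL : ∀ p ∈ BL, shape2 p = 3 := by rintro p ⟨q, -, rfl⟩; exact shape2_embL q
  have sBR : ∀ p ∈ BR, shape2 p = 4 := by rintro p ⟨q, -, rfl⟩; exact shape2_embR q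
  have dshape : ∀ (s t : Set (PV (n + 1) × PV (n + 1))) (a b : ℕ), a ≠ b →
      (∀ p ∈ s, shape2 p = a) → (∀ p ∈ t, shape2 p = b) → Disjoint s t := by
    intro s t a b hab hs ht
    rw [Set.disjoint_left]
    intro p hp hq
    exact hab (((hs p hp).symm).trans (ht p hq))
  have hsub : AL ∪ AR ∪ BL ∪ BR ⊆ cutP (n + 1) F c := by
    rintro p (((⟨j, hj, rfl⟩ | ⟨j, hj, rfl⟩) | ⟨q, hq, rfl⟩) | ⟨q, hq, rfl⟩)
    · exact phiL_mem F c j hj.1 hj.2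
    · exact phiR_mem F c j hj.1 hj.2
    · exact embL_mem F c q hq
    · exact embR_mem F c q hq
  have hcard : (AL ∪ AR ∪ BL ∪ BR).ncard = AL.ncard + AR.ncard + BL.ncard + BR.ncard := by
    rw [Set.ncard_union_eq (by
        refine Set.disjoint_union_left.mpr ⟨Set.disjoint_union_left.mpr ⟨?_, ?_⟩, ?_⟩
        · exact dshape _ _ 1 4 (by omega) sAL sBR
        · exact dshape _ _ 2 4 (by omega) sAR sBR
        · exact dshape _ _ 3 4 (by omega) sBL sBR) (Set.toFinite _) (Set.toFinite _),
      Set.ncard_union_eq (by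
        refine Set.disjoint_union_left.mpr ⟨?_, ?_⟩
        · exact dshape _ _ 1 3 (by omega) sAL sBL
        · exact dshape _ _ 2 3 (by omega) sAR sBL) (Set.toFinite _) (Set.toFinite _),
      Set.ncard_union_eq (dshape _ _ 1 2 (by omega) sAL sAR) (Set.toFinite _) (Set.toFinite _)]
  have hALc : AL.ncard = DL.ncard := Set.ncard_image_of_injective _ (phiL_inj c)
  have hARc : AR.ncard = DR.ncard := Set.ncard_image_of_injective _ (phiR_inj c)
  have hBLc : BL.ncard = (cutP n ∅ cl).ncard := Set.ncard_image_of_injective _ embL_inj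
  have hBRc : BR.ncard = (cutP n ∅ cr).ncard := Set.ncard_image_of_injective _ embR_inj
  have hfinal : (AL ∪ AR ∪ BL ∪ BR).ncard ≤ (cutP (n + 1) F c).ncard :=
    Set.ncard_le_ncard hsub (Set.toFinite _)
  omega

lemma main_cut_bound :
    ∀ (k : ℕ) (F : Finset (Fin (2 ^ (k + 1)))) (c : PV k → Bool),
      2 * min (xcnt k F c true) (xcnt k F c false) ≤ (cutP k F c).ncard := by
  intro k
  induction k with
  | zero => exact base_case
  | succ n ih => exact step_case n ih

lemma mem_S_of_not_frozen (k : ℕ) (Abar : Finset (Fin (2 ^ (k + 1)))) (j : Fin (2 ^ (k + 1)))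
    (hj : j ∉ Abar) : ∀ j' ∈ Abar, sym k j ≠ sym k j' :=
  fun j' hj' heq => hj (sym_injective k heq ▸ hj')

/-- Let `N = 2^(k+1)` and let `𝒜̄ ⊆ {1,…,N}` be frozen indices defining
the `(k+1)`-frozen-bit polar decoding graph (the graph induced by `P_{k+1}` on the
vertices that are not frozen symbol nodes), of rate `R = 1 − |𝒜̄|/N > 2/3`.  Then every
bisection of the unfrozen nodes of this graph has width at least `N(3R − 2)`; that is,
the minimum bisection width `ω` of the unfrozen nodes satisfies `ω ≥ N(3R − 2)`. -/
theorem frozen_polar_graph_bisection_bound (k : ℕ) (Abar : Finset (Fin (2 ^ (k + 1))))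
    (R : ℝ) (hR : R = 1 - (Abar.card : ℝ) / 2 ^ (k + 1)) (hR23 : 2 / 3 < R)
    (S : Set (PV k)) (hS : S = {v : PV k | ∀ j ∈ Abar, v ≠ sym k j})
    (X : Set ↥S) (hX : X = {v : ↥S | ∃ j : Fin (2 ^ (k + 1)), j ∉ Abar ∧ (v : PV k) = sym k j})
    (B : Set ↥S)
    (hbal : |((B ∩ X).ncard : ℤ) - ((Bᶜ ∩ X).ncard : ℤ)| ≤ 1) :
    (2 ^ (k + 1) : ℝ) * (3 * R - 2) ≤ partWidth ((PG k).induce S) B := by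
  classical
  subst hX
  have hSm : ∀ v : PV k, v ∈ S ↔ ∀ j ∈ Abar, v ≠ sym k j := fun v => by
    rw [hS]; exact Iff.rfl
  set c : PV k → Bool := fun v => decide (∃ h : v ∈ S, (⟨v, h⟩ : ↥S) ∈ B) with hc
  -- the partition width equals the cardinality of the cut set
  have hinj : Function.Injective (fun p : ↥S × ↥S => ((p.1 : PV k), (p.2 : PV k))) := by
    intro a b h
    exact Prod.ext (Subtype.ext (congrArg Prod.fst h)) (Subtype.ext (congrArg Prod.snd h))
  have himg : (fun p : ↥S × ↥S => ((p.1 : PV k), (p.2 : PV k))) ''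
      {p : ↥S × ↥S | p.1 ∈ B ∧ p.2 ∉ B ∧ ((PG k).induce S).Adj p.1 p.2} = cutP k Abar c := by
    ext q
    constructor
    · rintro ⟨⟨u, v⟩, ⟨hu, hv, hadj⟩, rfl⟩
      refine ⟨hadj, decide_eq_true ⟨u.2, hu⟩, ?_, (hSm _).mp u.2, (hSm _).mp v.2⟩
      apply decide_eq_false
      rintro ⟨h, hmem⟩
      exact hv hmem
    · rintro ⟨hadj, hcu, hcv, hnu, hnv⟩
      obtain ⟨h1, hB1⟩ := of_decide_eq_true hcu
      have h2 : q.2 ∈ S := (hSm _).mpr hnv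
      have hB2 : (⟨q.2, h2⟩ : ↥S) ∉ B := fun hmem => of_decide_eq_false hcv ⟨h2, hmem⟩
      exact ⟨(⟨q.1, h1⟩, ⟨q.2, h2⟩), ⟨hB1, hB2, hadj⟩, rfl⟩
  have hwidth : partWidth ((PG k).induce S) B = (cutP k Abar c).ncard := by
    unfold partWidth
    rw [← himg, Set.ncard_image_of_injective _ hinj]
  -- the intersections with X count the unfrozen symbols of each colour
  have hXt : (B ∩ {v : ↥S | ∃ j : Fin (2 ^ (k + 1)), j ∉ Abar ∧ (v : PV k) = sym k j}).ncard =
      xcnt k Abar c true := by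
    have himg2 : Subtype.val '' (B ∩ {v : ↥S | ∃ j, j ∉ Abar ∧ (v : PV k) = sym k j}) =
        sym k '' {j : Fin (2 ^ (k + 1)) | j ∉ Abar ∧ c (sym k j) = true} := by
      ext w
      constructor
      · rintro ⟨v, ⟨hvB, j, hj, hvj⟩, rfl⟩
        refine ⟨j, ⟨hj, ?_⟩, hvj.symm⟩
        rw [← hvj]
        exact decide_eq_true ⟨v.2, hvB⟩
      · rintro ⟨j, ⟨hj, hcj⟩, rfl⟩
        obtain ⟨hS', hB'⟩ := of_decide_eq_true hcj
        exact ⟨⟨sym k j, hS'⟩, ⟨hB', ⟨j, hj, rfl⟩⟩, rfl⟩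
    calc (B ∩ {v : ↥S | ∃ j, j ∉ Abar ∧ (v : PV k) = sym k j}).ncard
        = (Subtype.val '' (B ∩ {v : ↥S | ∃ j, j ∉ Abar ∧ (v : PV k) = sym k j})).ncard :=
          (Set.ncard_image_of_injective _ Subtype.val_injective).symm
      _ = (sym k '' {j : Fin (2 ^ (k + 1)) | j ∉ Abar ∧ c (sym k j) = true}).ncard := by
          rw [himg2]
      _ = xcnt k Abar c true := Set.ncard_image_of_injective _ (sym_injective k)
  have hXf : (Bᶜ ∩ {v : ↥S | ∃ j : Fin (2 ^ (k + 1)), j ∉ Abar ∧ (v : PV k) = sym k j}).ncard =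
      xcnt k Abar c false := by
    have himg2 : Subtype.val '' (Bᶜ ∩ {v : ↥S | ∃ j, j ∉ Abar ∧ (v : PV k) = sym k j}) =
        sym k '' {j : Fin (2 ^ (k + 1)) | j ∉ Abar ∧ c (sym k j) = false} := by
      ext w
      constructor
      · rintro ⟨v, ⟨hvB, j, hj, hvj⟩, rfl⟩
        refine ⟨j, ⟨hj, ?_⟩, hvj.symm⟩
        rw [← hvj]
        apply decide_eq_false
        rintro ⟨h, hmem⟩
        exact hvB hmem
      · rintro ⟨j, ⟨hj, hcj⟩, rfl⟩
        have hS' : sym k j ∈ S := (hSm _).mpr (mem_S_of_not_frozen k Abar j hj)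
        refine ⟨⟨sym k j, hS'⟩, ⟨fun hmem => of_decide_eq_false hcj ⟨hS', hmem⟩,
          ⟨j, hj, rfl⟩⟩, rfl⟩
    calc (Bᶜ ∩ {v : ↥S | ∃ j, j ∉ Abar ∧ (v : PV k) = sym k j}).ncard
        = (Subtype.val '' (Bᶜ ∩ {v : ↥S | ∃ j, j ∉ Abar ∧ (v : PV k) = sym k j})).ncard :=
          (Set.ncard_image_of_injective _ Subtype.val_injective).symm
      _ = (sym k '' {j : Fin (2 ^ (k + 1)) | j ∉ Abar ∧ c (sym k j) = false}).ncard := by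
          rw [himg2]
      _ = xcnt k Abar c false := Set.ncard_image_of_injective _ (sym_injective k)
  -- total count of unfrozen symbols
  have hsumc : xcnt k Abar c true + xcnt k Abar c false + Abar.card = 2 ^ (k + 1) := by
    have hd1 : Disjoint {j : Fin (2 ^ (k + 1)) | j ∉ Abar ∧ c (sym k j) = true}
        {j : Fin (2 ^ (k + 1)) | j ∉ Abar ∧ c (sym k j) = false} := by
      rw [Set.disjoint_left]
      rintro j ⟨-, h1⟩ ⟨-, h2⟩
      rw [h1] at h2
      exact Bool.noConfusion h2
    have hd2 : Disjoint ({j : Fin (2 ^ (k + 1)) | j ∉ Abar ∧ c (sym k j) = true} ∪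
        {j : Fin (2 ^ (k + 1)) | j ∉ Abar ∧ c (sym k j) = false}) (↑Abar : Set (Fin (2 ^ (k + 1)))) := by
      rw [Set.disjoint_left]
      rintro j (⟨h1, -⟩ | ⟨h1, -⟩) h2 <;> exact h1 h2
    have huniv : {j : Fin (2 ^ (k + 1)) | j ∉ Abar ∧ c (sym k j) = true} ∪
        {j : Fin (2 ^ (k + 1)) | j ∉ Abar ∧ c (sym k j) = false} ∪ (↑Abar : Set (Fin (2 ^ (k + 1)))) =
        Set.univ := by
      ext j
      by_cases hj : j ∈ Abar <;> cases hcj : c (sym k j) <;> simp [hj, hcj]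
    calc xcnt k Abar c true + xcnt k Abar c false + Abar.card
        = ({j : Fin (2 ^ (k + 1)) | j ∉ Abar ∧ c (sym k j) = true} ∪
            {j : Fin (2 ^ (k + 1)) | j ∉ Abar ∧ c (sym k j) = false} ∪
            (↑Abar : Set (Fin (2 ^ (k + 1))))).ncard := by
          rw [Set.ncard_union_eq hd2 (Set.toFinite _) (Set.toFinite _),
            Set.ncard_union_eq hd1 (Set.toFinite _) (Set.toFinite _), Set.ncard_coe_finset]
          rfl
      _ = 2 ^ (k + 1) := by rw [huniv, Set.ncard_univ]; simp
  -- integer bound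
  have hmain := main_cut_bound k Abar c
  rw [hXt, hXf] at hbal
  obtain ⟨hb1, hb2⟩ := abs_le.mp hbal
  have hev : 2 ^ (k + 1) = 2 * 2 ^ k := by rw [pow_succ]; ring
  have key : ((2 ^ (k + 1) : ℕ) : ℤ) - 3 * Abar.card ≤ ((cutP k Abar c).ncard : ℤ) := by
    rcases le_total (xcnt k Abar c true) (xcnt k Abar c false) with h | h
    · rw [min_eq_left h] at hmain
      omega
    · rw [min_eq_right h] at hmain
      omega
  -- conclude over the reals
  rw [hwidth]
  have hN0 : (2 : ℝ) ^ (k + 1) ≠ 0 := by positivity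
  have heq : (2 ^ (k + 1) : ℝ) * (3 * R - 2) = (2 ^ (k + 1) : ℝ) - 3 * Abar.card := by
    rw [hR]
    field_simp
    ring
  rw [heq]
  exact_mod_cast key
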